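/- Let (X,Y) have a bivariate elliptical density f(x,y) = f₀(‖(x,y)‖²_{e,ρ}) where ‖(x,y)‖_{e,ρ} = ((x²+y²-2ρxy)/(1-ρ²))^{1/2} with ρ ∈ (-1,1). Then with R_e = ‖(X,Y)‖_{e,ρ} and Θ = atan2(Y,X), the joint density of (R_e,Θ) factorizes as f(r,θ) = α(θ)²·r·f₀(r²), where α(θ) = ((1-ρ²)/(1-ρ sin(2θ)))^{1/2}; in particular R_e and Θ are independent. -/

import Mathlib

open MeasureTheory Set

/-- The elliptical norm `‖(x,y)‖_{e,ρ} = ((x²+y²-2ρxy)/(1-ρ²))^{1/2}`. -/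
noncomputable def eNorm (ρ : ℝ) (p : ℝ × ℝ) : ℝ :=
  Real.sqrt ((p.1 ^ 2 + p.2 ^ 2 - 2 * ρ * p.1 * p.2) / (1 - ρ ^ 2))

/-- `α(θ) = ((1-ρ²)/(1-ρ sin 2θ))^{1/2}`. -/
noncomputable def alphaFun (ρ θ : ℝ) : ℝ :=
  Real.sqrt ((1 - ρ ^ 2) / (1 - ρ * Real.sin (2 * θ)))

section Aux
open Real

variable {ρ : ℝ}

lemma upos (hρ : ρ ∈ Set.Ioo (-1:ℝ) 1) (θ : ℝ) : 0 < 1 - ρ * Real.sin (2*θ) := by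
  have h1 : |ρ| < 1 := abs_lt.2 ⟨hρ.1, hρ.2⟩
  have h2 : |ρ * Real.sin (2*θ)| ≤ |ρ| := by
    rw [abs_mul]
    nlinarith [abs_nonneg ρ, Real.abs_sin_le_one (2*θ), abs_nonneg (Real.sin (2*θ))]
  have := (abs_lt.1 (lt_of_le_of_lt h2 h1)).2
  linarith

lemma kpos (hρ : ρ ∈ Set.Ioo (-1:ℝ) 1) : 0 < 1 - ρ^2 := by nlinarith [hρ.1, hρ.2]

lemma alpha_pos (hρ : ρ ∈ Set.Ioo (-1:ℝ) 1) (θ : ℝ) : 0 < alphaFun ρ θ :=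
  Real.sqrt_pos.2 (div_pos (kpos hρ) (upos hρ θ))

lemma alpha_sq (hρ : ρ ∈ Set.Ioo (-1:ℝ) 1) (θ : ℝ) :
    alphaFun ρ θ ^ 2 = (1 - ρ ^ 2) / (1 - ρ * Real.sin (2*θ)) :=
  Real.sq_sqrt (le_of_lt (div_pos (kpos hρ) (upos hρ θ)))

lemma alpha_diff (hρ : ρ ∈ Set.Ioo (-1:ℝ) 1) (θ : ℝ) :
    DifferentiableAt ℝ (alphaFun ρ) θ := by
  have h1 : DifferentiableAt ℝ (fun θ => (1 - ρ ^ 2) / (1 - ρ * Real.sin (2 * θ))) θ := by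
    apply DifferentiableAt.div (differentiableAt_const _)
    · exact (differentiableAt_const _).sub
        ((differentiableAt_const _).mul ((Real.differentiable_sin _).comp θ
          ((differentiableAt_const _).mul differentiableAt_fun_id)))
    · exact (upos hρ θ).ne'
  exact h1.sqrt (div_pos (kpos hρ) (upos hρ θ)).ne'

noncomputable def psiMap (ρ : ℝ) (x : ℝ × ℝ) : ℝ × ℝ :=
  (x.1 * (alphaFun ρ x.2 * Real.cos x.2), x.1 * (alphaFun ρ x.2 * Real.sin x.2))

noncomputable def Bmat (ρ : ℝ) (x : ℝ × ℝ) : (ℝ × ℝ) →L[ℝ] (ℝ × ℝ) :=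
  LinearMap.toContinuousLinearMap (Matrix.toLin (Module.Basis.finTwoProd ℝ) (Module.Basis.finTwoProd ℝ)
    !![alphaFun ρ x.2 * Real.cos x.2,
       x.1 * (deriv (alphaFun ρ) x.2 * Real.cos x.2 - alphaFun ρ x.2 * Real.sin x.2);
       alphaFun ρ x.2 * Real.sin x.2,
       x.1 * (deriv (alphaFun ρ) x.2 * Real.sin x.2 + alphaFun ρ x.2 * Real.cos x.2)])

lemma hasFDerivAt_psiMap {ρ : ℝ} (hd : ∀ θ, DifferentiableAt ℝ (alphaFun ρ) θ) (x : ℝ × ℝ) :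
    HasFDerivAt (psiMap ρ) (Bmat ρ x) x := by
  have hα : HasDerivAt (alphaFun ρ) (deriv (alphaFun ρ) x.2) x.2 := (hd x.2).hasDerivAt
  have hc : HasDerivAt (fun θ => alphaFun ρ θ * Real.cos θ)
      (deriv (alphaFun ρ) x.2 * Real.cos x.2 - alphaFun ρ x.2 * Real.sin x.2) x.2 := by
    exact (hα.mul (Real.hasDerivAt_cos x.2)).congr_deriv (by ring)
  have hs : HasDerivAt (fun θ => alphaFun ρ θ * Real.sin θ)
      (deriv (alphaFun ρ) x.2 * Real.sin x.2 + alphaFun ρ x.2 * Real.cos x.2) x.2 := by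
    exact (hα.mul (Real.hasDerivAt_sin x.2)).congr_deriv (by ring)
  have h1 := HasFDerivAt.prodMk (𝕜 := ℝ)
    (hasFDerivAt_fst.mul (hc.comp_hasFDerivAt x hasFDerivAt_snd))
    (hasFDerivAt_fst.mul (hs.comp_hasFDerivAt x hasFDerivAt_snd))
  refine h1.congr_fderiv (Eq.symm ?_)
  rw [Bmat, Matrix.toLin_finTwoProd_toContinuousLinearMap]
  apply ContinuousLinearMap.ext
  rintro ⟨dx, dy⟩
  simp only [ContinuousLinearMap.prod_apply, ContinuousLinearMap.add_apply,
    ContinuousLinearMap.coe_smul', Pi.smul_apply, ContinuousLinearMap.coe_fst',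
    ContinuousLinearMap.coe_snd', smul_eq_mul, Function.comp_apply, Prod.mk.injEq]
  constructor <;> ring

lemma Bmat_det {ρ : ℝ} (x : ℝ × ℝ) :
    (Bmat ρ x).det = x.1 * alphaFun ρ x.2 ^ 2 := by
  have : (Bmat ρ x).det = alphaFun ρ x.2 * Real.cos x.2 *
      (x.1 * (deriv (alphaFun ρ) x.2 * Real.sin x.2 + alphaFun ρ x.2 * Real.cos x.2)) -
      x.1 * (deriv (alphaFun ρ) x.2 * Real.cos x.2 - alphaFun ρ x.2 * Real.sin x.2) *
      (alphaFun ρ x.2 * Real.sin x.2) := by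
    simp only [Bmat, LinearMap.det_toContinuousLinearMap, LinearMap.det_toLin,
      Matrix.det_fin_two_of]
  rw [this]
  have h2 : alphaFun ρ x.2 * Real.cos x.2 *
      (x.1 * (deriv (alphaFun ρ) x.2 * Real.sin x.2 + alphaFun ρ x.2 * Real.cos x.2)) -
      x.1 * (deriv (alphaFun ρ) x.2 * Real.cos x.2 - alphaFun ρ x.2 * Real.sin x.2) *
      (alphaFun ρ x.2 * Real.sin x.2)
      = x.1 * alphaFun ρ x.2 ^ 2 * (Real.sin x.2 ^ 2 + Real.cos x.2 ^ 2) := by ring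
  rw [h2, Real.sin_sq_add_cos_sq, mul_one]

noncomputable def Tmap (ρ : ℝ) (p : ℝ × ℝ) : ℝ × ℝ :=
  (eNorm ρ p, Complex.arg ⟨p.1, p.2⟩)

lemma eNorm_psiMap (hρ : ρ ∈ Set.Ioo (-1:ℝ) 1) {x : ℝ × ℝ} (hx : 0 ≤ x.1) :
    eNorm ρ (psiMap ρ x) = x.1 := by
  obtain ⟨r, θ⟩ := x
  simp only [psiMap, eNorm]
  have hu := upos hρ θ
  have hk := kpos hρ
  have hα := alpha_sq hρ θ
  have : (r * (alphaFun ρ θ * Real.cos θ)) ^ 2 + (r * (alphaFun ρ θ * Real.sin θ)) ^ 2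
      - 2 * ρ * (r * (alphaFun ρ θ * Real.cos θ)) * (r * (alphaFun ρ θ * Real.sin θ))
      = r ^ 2 * (alphaFun ρ θ ^ 2) * (1 - ρ * Real.sin (2 * θ)) := by
    rw [Real.sin_two_mul]
    have hcs := Real.sin_sq_add_cos_sq θ
    nlinarith [hcs]
  rw [this, hα]
  have : r ^ 2 * ((1 - ρ ^ 2) / (1 - ρ * Real.sin (2 * θ))) * (1 - ρ * Real.sin (2 * θ))
      / (1 - ρ ^ 2) = r ^ 2 := by
    field_simp
  rw [this]
  exact Real.sqrt_sq hx

lemma arg_psiMap (hρ : ρ ∈ Set.Ioo (-1:ℝ) 1) {x : ℝ × ℝ} (hr : 0 < x.1)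
    (hθ : x.2 ∈ Set.Ioc (-Real.pi) Real.pi) :
    Complex.arg ⟨(psiMap ρ x).1, (psiMap ρ x).2⟩ = x.2 := by
  obtain ⟨r, θ⟩ := x
  have hpos : 0 < r * alphaFun ρ θ := mul_pos hr (alpha_pos hρ θ)
  have h := Complex.arg_mul_cos_add_sin_mul_I hpos hθ
  convert h using 2
  apply Complex.ext <;>
    simp [psiMap, Complex.ofReal_mul, Complex.cos_ofReal_re, Complex.sin_ofReal_re] <;> ring

lemma Tmap_psiMap (hρ : ρ ∈ Set.Ioo (-1:ℝ) 1) {x : ℝ × ℝ}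
    (hx : x ∈ Set.Ioi (0:ℝ) ×ˢ Set.Ioo (-Real.pi) Real.pi) :
    Tmap ρ (psiMap ρ x) = x := by
  obtain ⟨hr, hθ⟩ := hx
  ext
  · exact eNorm_psiMap hρ (le_of_lt hr)
  · exact arg_psiMap hρ hr ⟨hθ.1, hθ.2.le⟩

lemma psiMap_eq_polar (ρ : ℝ) (x : ℝ × ℝ) :
    psiMap ρ x = polarCoord.symm (x.1 * alphaFun ρ x.2, x.2) := by
  simp [psiMap, polarCoord, mul_assoc]

lemma psiMap_mem_source (hρ : ρ ∈ Set.Ioo (-1:ℝ) 1) {x : ℝ × ℝ}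
    (hx : x ∈ Set.Ioi (0:ℝ) ×ˢ Set.Ioo (-Real.pi) Real.pi) :
    psiMap ρ x ∈ polarCoord.source := by
  rw [psiMap_eq_polar]
  apply polarCoord.map_target
  exact ⟨mul_pos hx.1 (alpha_pos hρ x.2), hx.2⟩

lemma image_psiMap (hρ : ρ ∈ Set.Ioo (-1:ℝ) 1) (S : Set (ℝ × ℝ)) :
    psiMap ρ '' ((Set.Ioi (0:ℝ) ×ˢ Set.Ioo (-Real.pi) Real.pi) ∩ S)
      = Tmap ρ ⁻¹' S ∩ polarCoord.source := by
  ext p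
  constructor
  · rintro ⟨x, ⟨hxt, hxS⟩, rfl⟩
    refine ⟨?_, psiMap_mem_source hρ hxt⟩
    show Tmap ρ (psiMap ρ x) ∈ S
    rw [Tmap_psiMap hρ hxt]
    exact hxS
  · rintro ⟨hpS, hps⟩
    have hpt : polarCoord p ∈ polarCoord.target := polarCoord.map_source hps
    set R := (polarCoord p).1
    set θ := (polarCoord p).2
    have hR : 0 < R := hpt.1
    have hθ : θ ∈ Set.Ioo (-Real.pi) Real.pi := hpt.2
    have hα := alpha_pos hρ θ
    have hmem : (R / alphaFun ρ θ, θ) ∈ Set.Ioi (0:ℝ) ×ˢ Set.Ioo (-Real.pi) Real.pi :=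
      ⟨div_pos hR hα, hθ⟩
    have hψp : psiMap ρ (R / alphaFun ρ θ, θ) = p := by
      rw [psiMap_eq_polar]
      simp only [div_mul_cancel₀ _ hα.ne']
      exact polarCoord.left_inv hps
    refine ⟨(R / alphaFun ρ θ, θ), ⟨hmem, ?_⟩, hψp⟩
    have h2 := Tmap_psiMap hρ hmem
    rw [hψp] at h2
    rw [← h2]
    exact hpS

noncomputable def bFun (f0 : ℝ → ℝ) : ℝ → ENNReal :=
  (Set.Ioi (0:ℝ)).indicator (fun r => ENNReal.ofReal (r * f0 (r^2)))

noncomputable def aFun (ρ : ℝ) : ℝ → ENNReal :=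
  (Set.Ioc (-Real.pi) Real.pi).indicator (fun θ => ENNReal.ofReal (alphaFun ρ θ ^ 2))

lemma density_eq (hρ : ρ ∈ Set.Ioo (-1:ℝ) 1) (f0 : ℝ → ℝ) (hnn : ∀ t, 0 ≤ f0 t) (x : ℝ × ℝ) :
    ENNReal.ofReal (if 0 < x.1 ∧ -Real.pi < x.2 ∧ x.2 ≤ Real.pi
      then (alphaFun ρ x.2) ^ 2 * x.1 * f0 (x.1 ^ 2) else 0)
    = bFun f0 x.1 * aFun ρ x.2 := by
  by_cases h : 0 < x.1 ∧ -Real.pi < x.2 ∧ x.2 ≤ Real.pi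
  · rw [if_pos h, bFun, aFun, Set.indicator_of_mem (Set.mem_Ioi.mpr h.1),
      Set.indicator_of_mem (Set.mem_Ioc.mpr ⟨h.2.1, h.2.2⟩),
      ← ENNReal.ofReal_mul (mul_nonneg h.1.le (hnn _))]
    congr 1
    ring
  · rw [if_neg h, ENNReal.ofReal_zero]
    push_neg at h
    by_cases h1 : 0 < x.1
    · have h2 : x.2 ∉ Set.Ioc (-Real.pi) Real.pi := by
        intro hm
        exact absurd (h h1 hm.1) (not_lt.2 hm.2)
      rw [aFun, Set.indicator_of_notMem h2, mul_zero]
    · rw [bFun, Set.indicator_of_notMem (by simpa using h1), zero_mul]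

lemma bFun_measurable {f0 : ℝ → ℝ} (hmeas : Measurable f0) : Measurable (bFun f0) := by
  apply Measurable.indicator _ measurableSet_Ioi
  exact (measurable_id.mul (hmeas.comp (measurable_id.pow_const 2))).ennreal_ofReal

lemma alphaFun_measurable (hρ : ρ ∈ Set.Ioo (-1:ℝ) 1) : Measurable (alphaFun ρ) := by
  apply Real.continuous_sqrt.measurable.comp
  exact (measurable_const.div ((measurable_const.sub
    (measurable_const.mul ((Real.continuous_sin.measurable).comp
      (measurable_const.mul measurable_id))))))

lemma aFun_measurable (hρ : ρ ∈ Set.Ioo (-1:ℝ) 1) : Measurable (aFun ρ) := by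
  apply Measurable.indicator _ measurableSet_Ioc
  exact ((alphaFun_measurable hρ).pow_const 2).ennreal_ofReal

lemma eNorm_measurable (ρ : ℝ) : Measurable (eNorm ρ) := by
  apply Real.continuous_sqrt.measurable.comp
  apply Measurable.div _ measurable_const
  exact ((measurable_fst.pow_const 2).add (measurable_snd.pow_const 2)).sub
    ((measurable_const.mul measurable_fst).mul measurable_snd)

lemma Tmap_measurable (ρ : ℝ) : Measurable (Tmap ρ) := by
  apply Measurable.prodMk (eNorm_measurable ρ)
  have : (fun p : ℝ × ℝ => Complex.arg ⟨p.1, p.2⟩)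
      = Complex.arg ∘ Complex.measurableEquivRealProd.symm := rfl
  rw [this]
  exact Complex.measurable_arg.comp Complex.measurableEquivRealProd.symm.measurable

lemma psiMap_injOn (hρ : ρ ∈ Set.Ioo (-1:ℝ) 1) :
    Set.InjOn (psiMap ρ) (Set.Ioi (0:ℝ) ×ˢ Set.Ioo (-Real.pi) Real.pi) := by
  intro a ha b hb h
  rw [← Tmap_psiMap hρ ha, ← Tmap_psiMap hρ hb, h]

lemma pi_slice_null : (volume : Measure (ℝ × ℝ)) ((Set.univ : Set ℝ) ×ˢ ({Real.pi} : Set ℝ)) = 0 := by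
  rw [Measure.volume_eq_prod, Measure.prod_prod, Real.volume_singleton, mul_zero]

lemma main_cov (hρ : ρ ∈ Set.Ioo (-1:ℝ) 1) (f0 : ℝ → ℝ) (hmeas : Measurable f0)
    (hnn : ∀ t, 0 ≤ f0 t) (S : Set (ℝ × ℝ)) (hS : MeasurableSet S) :
    ∫⁻ p in Tmap ρ ⁻¹' S, ENNReal.ofReal (f0 (eNorm ρ p ^ 2))
      = ∫⁻ x in S, bFun f0 x.1 * aFun ρ x.2 := by
  set tgt : Set (ℝ × ℝ) := Set.Ioi (0:ℝ) ×ˢ Set.Ioo (-Real.pi) Real.pi with htgt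
  set tgtc : Set (ℝ × ℝ) := Set.Ioi (0:ℝ) ×ˢ Set.Ioc (-Real.pi) Real.pi with htgtc
  have htgtm : MeasurableSet tgt := measurableSet_Ioi.prod measurableSet_Ioo
  have htgtcm : MeasurableSet tgtc := measurableSet_Ioi.prod measurableSet_Ioc
  have hsrcnull : volume polarCoord.sourceᶜ = 0 := ae_eq_univ.mp polarCoord_source_ae_eq_univ
  have hd : ∀ θ, DifferentiableAt ℝ (alphaFun ρ) θ := alpha_diff hρ
  -- Step A
  have hA : (Tmap ρ ⁻¹' S ∩ polarCoord.source : Set (ℝ × ℝ)) =ᵐ[volume] (Tmap ρ ⁻¹' S : Set (ℝ × ℝ)) := by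
    apply MeasureTheory.ae_eq_set.mpr
    refine ⟨?_, ?_⟩
    · rw [Set.diff_eq_empty.mpr Set.inter_subset_left]
      exact measure_empty
    · apply measure_mono_null _ hsrcnull
      rintro x ⟨hx1, hx2⟩
      exact fun hB => hx2 ⟨hx1, hB⟩
  rw [← setLIntegral_congr hA, ← image_psiMap hρ S]
  rw [MeasureTheory.lintegral_image_eq_lintegral_abs_det_fderiv_mul volume (htgtm.inter hS)
    (fun x _ => (hasFDerivAt_psiMap hd x).hasFDerivWithinAt)
    ((psiMap_injOn hρ).mono Set.inter_subset_left) _]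
  -- pointwise identification on tgt ∩ S
  have hB : ∫⁻ x in tgt ∩ S, ENNReal.ofReal |(Bmat ρ x).det|
        * ENNReal.ofReal (f0 (eNorm ρ (psiMap ρ x) ^ 2))
      = ∫⁻ x in tgt ∩ S, bFun f0 x.1 * aFun ρ x.2 := by
    apply setLIntegral_congr_fun (htgtm.inter hS)
    intro x hx
    have hr : 0 < x.1 := hx.1.1
    have hθ : x.2 ∈ Set.Ioo (-Real.pi) Real.pi := hx.1.2
    have hα := alpha_pos hρ x.2
    beta_reduce
    rw [Bmat_det, eNorm_psiMap hρ hr.le, abs_of_nonneg (by positivity),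
      bFun, aFun, Set.indicator_of_mem (Set.mem_Ioi.mpr hr),
      Set.indicator_of_mem (Set.mem_Ioc.mpr ⟨hθ.1, hθ.2.le⟩),
      ← ENNReal.ofReal_mul (by positivity), ← ENNReal.ofReal_mul (mul_nonneg hr.le (hnn _))]
    congr 1
    ring
  rw [hB]
  -- Step E : extend from tgt ∩ S to S
  have hD0 : ∀ x : ℝ × ℝ, bFun f0 x.1 * aFun ρ x.2
      = tgtc.indicator (fun x : ℝ × ℝ => bFun f0 x.1 * aFun ρ x.2) x := by
    intro x
    by_cases hx : x ∈ tgtc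
    · rw [Set.indicator_of_mem hx]
    · rw [Set.indicator_of_notMem hx]
      rw [htgtc, Set.mem_prod, not_and_or] at hx
      rcases hx with hx | hx
      · rw [bFun, Set.indicator_of_notMem hx, zero_mul]
      · rw [aFun, Set.indicator_of_notMem hx, mul_zero]
  have hE : ∫⁻ x in S, bFun f0 x.1 * aFun ρ x.2 = ∫⁻ x in tgtc ∩ S, bFun f0 x.1 * aFun ρ x.2 := by
    rw [lintegral_congr (fun x => hD0 x), lintegral_indicator htgtcm,
      Measure.restrict_restrict htgtcm]
  rw [hE]
  apply setLIntegral_congr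
  apply MeasureTheory.ae_eq_set.mpr ⟨?_, ?_⟩
  · rw [Set.diff_eq_empty.mpr (Set.inter_subset_inter_left _
      (Set.prod_mono_right Set.Ioo_subset_Ioc_self))]
    exact measure_empty
  · apply measure_mono_null _ pi_slice_null
    rintro ⟨a, b⟩ ⟨⟨⟨ha, hb⟩, hSx⟩, hnot⟩
    refine ⟨trivial, ?_⟩
    rcases lt_or_eq_of_le hb.2 with h | h
    · exact absurd ⟨⟨ha, hb.1, h⟩, hSx⟩ hnot
    · exact h

end Aux

/-- For an elliptical density `f(x,y) = f₀(‖(x,y)‖²_{e,ρ})`, the pair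
`(R_e, Θ) = (‖(X,Y)‖_{e,ρ}, atan2(Y,X))` has joint density `α(θ)²·r·f₀(r²)`,
and `R_e` and `Θ` are independent. -/
theorem stmt3 (ρ : ℝ) (hρ : ρ ∈ Set.Ioo (-1 : ℝ) 1) (f0 : ℝ → ℝ)
    (hmeas : Measurable f0) (hnn : ∀ t, 0 ≤ f0 t)
    (hint : MeasureTheory.IntegrableOn (fun r => r * f0 (r ^ 2)) (Set.Ioi 0))
    (hprob : (∫ p : ℝ × ℝ, f0 ((eNorm ρ p) ^ 2)) = 1) :
    (Measure.map (fun p : ℝ × ℝ => (eNorm ρ p, Complex.arg ⟨p.1, p.2⟩))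
        (Measure.withDensity volume (fun p => ENNReal.ofReal (f0 ((eNorm ρ p) ^ 2))))
      = Measure.withDensity volume (fun x : ℝ × ℝ => ENNReal.ofReal
          (if 0 < x.1 ∧ -Real.pi < x.2 ∧ x.2 ≤ Real.pi
            then (alphaFun ρ x.2) ^ 2 * x.1 * f0 (x.1 ^ 2) else 0))) ∧
    (Measure.map (fun p : ℝ × ℝ => (eNorm ρ p, Complex.arg ⟨p.1, p.2⟩))
        (Measure.withDensity volume (fun p => ENNReal.ofReal (f0 ((eNorm ρ p) ^ 2))))
      = (Measure.map (fun p : ℝ × ℝ => eNorm ρ p)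
            (Measure.withDensity volume (fun p => ENNReal.ofReal (f0 ((eNorm ρ p) ^ 2))))).prod
          (Measure.map (fun p : ℝ × ℝ => Complex.arg ⟨p.1, p.2⟩)
            (Measure.withDensity volume
              (fun p => ENNReal.ofReal (f0 ((eNorm ρ p) ^ 2)))))) := by
  set μ := Measure.withDensity volume
    (fun p : ℝ × ℝ => ENNReal.ofReal (f0 ((eNorm ρ p) ^ 2))) with hμ
  have hTfun : (fun p : ℝ × ℝ => (eNorm ρ p, Complex.arg ⟨p.1, p.2⟩)) = Tmap ρ := rfl
  have hT := Tmap_measurable ρ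
  rw [hTfun]
  set ν := Measure.map (Tmap ρ) μ with hν
  have hνapp : ∀ S : Set (ℝ × ℝ), MeasurableSet S →
      ν S = ∫⁻ x in S, bFun f0 x.1 * aFun ρ x.2 := by
    intro S hS
    rw [hν, Measure.map_apply hT hS, hμ, withDensity_apply _ (hT hS)]
    exact main_cov hρ f0 hmeas hnn S hS
  have hpart1 : ν = Measure.withDensity volume (fun x : ℝ × ℝ => ENNReal.ofReal
      (if 0 < x.1 ∧ -Real.pi < x.2 ∧ x.2 ≤ Real.pi
        then (alphaFun ρ x.2) ^ 2 * x.1 * f0 (x.1 ^ 2) else 0)) := by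
    ext S hS
    rw [hνapp S hS, withDensity_apply _ hS]
    exact (lintegral_congr fun x => density_eq hρ f0 hnn x).symm
  refine ⟨hpart1, ?_⟩
  -- total mass
  have h1 : ∫⁻ p, ENNReal.ofReal (f0 (eNorm ρ p ^ 2)) ∂(volume : Measure (ℝ × ℝ)) = 1 := by
    have hae : AEStronglyMeasurable (fun p : ℝ × ℝ => f0 (eNorm ρ p ^ 2))
        (volume : Measure (ℝ × ℝ)) :=
      (hmeas.comp ((eNorm_measurable ρ).pow_const 2)).aestronglyMeasurable
    rw [MeasureTheory.integral_eq_lintegral_of_nonneg_ae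
      (Filter.Eventually.of_forall fun p => hnn _) hae] at hprob
    exact (ENNReal.toReal_eq_one_iff _).mp hprob
  have hμuniv : μ Set.univ = 1 := by
    rw [hμ, withDensity_apply _ MeasurableSet.univ, Measure.restrict_univ]
    exact h1
  have hνuniv : ν Set.univ = 1 := by
    rw [hν, Measure.map_apply hT MeasurableSet.univ, Set.preimage_univ]
    exact hμuniv
  have hfact : ∀ A B : Set ℝ, MeasurableSet A → MeasurableSet B →
      ν (A ×ˢ B) = (∫⁻ r in A, bFun f0 r) * (∫⁻ θ in B, aFun ρ θ) := by
    intro A B hA hB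
    rw [hνapp _ (hA.prod hB), Measure.volume_eq_prod, ← Measure.prod_restrict]
    exact lintegral_prod_mul (bFun_measurable hmeas).aemeasurable
      (aFun_measurable hρ).aemeasurable
  set M1 := ∫⁻ r in Set.univ, bFun f0 r with hM1
  set M2 := ∫⁻ θ in Set.univ, aFun ρ θ with hM2
  have hMM : M1 * M2 = 1 := by
    rw [hM1, hM2, ← hfact _ _ MeasurableSet.univ MeasurableSet.univ,
      Set.univ_prod_univ, hνuniv]
  have hκ1 : Measure.map (fun p : ℝ × ℝ => eNorm ρ p) μ = Measure.map Prod.fst ν := by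
    rw [hν, Measure.map_map measurable_fst hT]
    rfl
  have hκ2 : Measure.map (fun p : ℝ × ℝ => Complex.arg ⟨p.1, p.2⟩) μ
      = Measure.map Prod.snd ν := by
    rw [hν, Measure.map_map measurable_snd hT]
    rfl
  have hm1 : ∀ A : Set ℝ, MeasurableSet A →
      (Measure.map Prod.fst ν) A = (∫⁻ r in A, bFun f0 r) * M2 := by
    intro A hA
    rw [Measure.map_apply measurable_fst hA, ← Set.prod_univ,
      hfact A _ hA MeasurableSet.univ]
  have hm2 : ∀ B : Set ℝ, MeasurableSet B →
      (Measure.map Prod.snd ν) B = M1 * (∫⁻ θ in B, aFun ρ θ) := by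
    intro B hB
    rw [Measure.map_apply measurable_snd hB, ← Set.univ_prod,
      hfact _ B MeasurableSet.univ hB]
  haveI hp1 : IsProbabilityMeasure (Measure.map Prod.fst ν) :=
    ⟨by rw [Measure.map_apply measurable_fst MeasurableSet.univ, Set.preimage_univ, hνuniv]⟩
  haveI hp2 : IsProbabilityMeasure (Measure.map Prod.snd ν) :=
    ⟨by rw [Measure.map_apply measurable_snd MeasurableSet.univ, Set.preimage_univ, hνuniv]⟩
  rw [hκ1, hκ2]
  refine (Measure.prod_eq ?_).symm
  intro s t hs ht
  rw [hfact s t hs ht, hm1 s hs, hm2 t ht]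
  have hexp : (∫⁻ r in s, bFun f0 r) * ∫⁻ θ in t, aFun ρ θ
      = ((∫⁻ r in s, bFun f0 r) * ∫⁻ θ in t, aFun ρ θ) * (M1 * M2) := by
    rw [hMM, mul_one]
  rw [hexp]
  ring
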